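/- Let ⟨A, Δ⟩ be a Jordan coalgebra over a field k of characteristic not 2 whose dual algebra A* is unital. For every l* ∈ L(A*) and l ∈ L(A) there exists an element i of the ideal I(A*) = A* ⊕ (A*)' ⊕ IntDer(A*) ⊕ Ā* of L(A*) satisfying [l, l*] = [l, i] (as module actions on L(A)) and ⟨l*, l⟩ = ⟨i, l⟩. -/

import Mathlib

open TensorProduct

variable {k : Type*} [Field k] {A : Type*} [AddCommGroup A] [Module k A]

/-- The multiplication on the dual space `A*` induced by a comultiplication `Δ`:
`⟨fg, a⟩ = Σ ⟨f, a₍₁₎⟩⟨g, a₍₂₎⟩`. -/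
noncomputable def dmul (Δ : A →ₗ[k] A ⊗[k] A) (f g : (A →ₗ[k] k)) : (A →ₗ[k] k) :=
  (TensorProduct.lid k k).toLinearMap ∘ₗ TensorProduct.map f g ∘ₗ Δ

/-- The left action `f·a = Σ a₍₁₎ ⟨f, a₍₂₎⟩` of the dual algebra on `A`. -/
noncomputable def lact (Δ : A →ₗ[k] A ⊗[k] A) (f : (A →ₗ[k] k)) : A →ₗ[k] A :=
  (TensorProduct.rid k A).toLinearMap ∘ₗ TensorProduct.map LinearMap.id f ∘ₗ Δ

/-- The right action `a·f = Σ ⟨f, a₍₁₎⟩ a₍₂₎` of the dual algebra on `A`. -/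
noncomputable def ract (Δ : A →ₗ[k] A ⊗[k] A) (f : (A →ₗ[k] k)) : A →ₗ[k] A :=
  (TensorProduct.lid k A).toLinearMap ∘ₗ TensorProduct.map f LinearMap.id ∘ₗ Δ

/-- `⟨A, Δ⟩` is a Jordan coalgebra: its dual algebra is commutative and satisfies
the Jordan identity `((ff)g)f = (ff)(gf)`. -/
def IsJordanCoalgebra (Δ : A →ₗ[k] A ⊗[k] A) : Prop :=
  (∀ f g : (A →ₗ[k] k), dmul Δ f g = dmul Δ g f) ∧
  (∀ f g : (A →ₗ[k] k),
    dmul Δ (dmul Δ (dmul Δ f f) g) f = dmul Δ (dmul Δ f f) (dmul Δ g f))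

/-- `B` is a subcoalgebra: `Δ(B) ⊆ B ⊗ B`. -/
def IsSubcoalgebra (Δ : A →ₗ[k] A ⊗[k] A) (B : Submodule k A) : Prop :=
  ∀ b ∈ B, Δ b ∈ LinearMap.range (TensorProduct.map B.subtype B.subtype)

/-- `B` is a coideal: `Δ(B) ⊆ B ⊗ A + A ⊗ B`. -/
def IsCoideal (Δ : A →ₗ[k] A ⊗[k] A) (B : Submodule k A) : Prop :=
  ∀ b ∈ B, Δ b ∈
    LinearMap.range (TensorProduct.map B.subtype (LinearMap.id (R := k) (M := A))) ⊔
    LinearMap.range (TensorProduct.map (LinearMap.id (R := k) (M := A)) B.subtype)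

/-- A derivation of the dual algebra `A*`. -/
def IsDerivation (Δ : A →ₗ[k] A ⊗[k] A)
    (d : (A →ₗ[k] k) →ₗ[k] (A →ₗ[k] k)) : Prop :=
  ∀ f g : (A →ₗ[k] k), d (dmul Δ f g) = dmul Δ (d f) g + dmul Δ f (d g)

theorem dmul_add_left (Δ : A →ₗ[k] A ⊗[k] A) (f₁ f₂ g : (A →ₗ[k] k)) :
    dmul Δ (f₁ + f₂) g = dmul Δ f₁ g + dmul Δ f₂ g := by
  unfold dmul; rw [TensorProduct.map_add_left]; ext a; simp

theorem dmul_add_right (Δ : A →ₗ[k] A ⊗[k] A) (f g₁ g₂ : (A →ₗ[k] k)) :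
    dmul Δ f (g₁ + g₂) = dmul Δ f g₁ + dmul Δ f g₂ := by
  unfold dmul; rw [TensorProduct.map_add_right]; ext a; simp

theorem dmul_smul_left (Δ : A →ₗ[k] A ⊗[k] A) (c : k) (f g : (A →ₗ[k] k)) :
    dmul Δ (c • f) g = c • dmul Δ f g := by
  unfold dmul; rw [TensorProduct.map_smul_left]; ext a; simp

theorem dmul_smul_right (Δ : A →ₗ[k] A ⊗[k] A) (c : k) (f g : (A →ₗ[k] k)) :
    dmul Δ f (c • g) = c • dmul Δ f g := by
  unfold dmul; rw [TensorProduct.map_smul_right]; ext a; simp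

theorem dmul_zero_left (Δ : A →ₗ[k] A ⊗[k] A) (g : (A →ₗ[k] k)) :
    dmul Δ (0 : (A →ₗ[k] k)) g = 0 := by
  ext a; simp [dmul]

theorem dmul_zero_right (Δ : A →ₗ[k] A ⊗[k] A) (f : (A →ₗ[k] k)) :
    dmul Δ f (0 : (A →ₗ[k] k)) = 0 := by
  ext a; simp [dmul]

/-- The operator of right multiplication `f' : g ↦ gf` on the dual algebra. -/
noncomputable def Rop (Δ : A →ₗ[k] A ⊗[k] A) (f : (A →ₗ[k] k)) :
    (A →ₗ[k] k) →ₗ[k] (A →ₗ[k] k) where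
  toFun g := dmul Δ g f
  map_add' g₁ g₂ := dmul_add_left Δ g₁ g₂ f
  map_smul' c g := dmul_smul_left Δ c g f

/-- The inner derivation `[f,g] = f'g' - g'f'` (in right-operator convention,
`x[f,g] = (xf)g - (xg)f`). -/
noncomputable def commD (Δ : A →ₗ[k] A ⊗[k] A) (f g : (A →ₗ[k] k)) :
    (A →ₗ[k] k) →ₗ[k] (A →ₗ[k] k) :=
  Rop Δ g ∘ₗ Rop Δ f - Rop Δ f ∘ₗ Rop Δ g

/-- The space of inner derivations of the dual algebra. -/
noncomputable def IntDer (Δ : A →ₗ[k] A ⊗[k] A) :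
    Submodule k ((A →ₗ[k] k) →ₗ[k] (A →ₗ[k] k)) :=
  Submodule.span k {d | ∃ f g : (A →ₗ[k] k), d = commD Δ f g}

/-- A weakly inner derivation of the dual algebra: a derivation that agrees with some
inner derivation on every finite-dimensional subcoalgebra. -/
def IsWIntDer (Δ : A →ₗ[k] A ⊗[k] A)
    (d : (A →ₗ[k] k) →ₗ[k] (A →ₗ[k] k)) : Prop :=
  IsDerivation Δ d ∧
  ∀ B : Submodule k A, IsSubcoalgebra Δ B → FiniteDimensional k B →
    ∃ i ∈ IntDer Δ, ∀ f : (A →ₗ[k] k), ∀ b ∈ B, d f b = i f b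

/-- The space of weakly inner derivations, as a submodule of `End(A*)`. -/
noncomputable def WIntDer (Δ : A →ₗ[k] A ⊗[k] A) :
    Submodule k ((A →ₗ[k] k) →ₗ[k] (A →ₗ[k] k)) where
  carrier := {d | IsWIntDer Δ d}
  zero_mem' := by
    refine ⟨fun f g => by simp [dmul_zero_left, dmul_zero_right],
      fun B hB hfin => ⟨0, Submodule.zero_mem _, fun f b hb => by simp⟩⟩
  add_mem' := by
    rintro d₁ d₂ ⟨hd₁, hw₁⟩ ⟨hd₂, hw₂⟩
    refine ⟨fun f g => ?_, fun B hB hfin => ?_⟩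
    · simp only [LinearMap.add_apply, hd₁ f g, hd₂ f g, dmul_add_left, dmul_add_right]
      abel
    · obtain ⟨i₁, hi₁, he₁⟩ := hw₁ B hB hfin
      obtain ⟨i₂, hi₂, he₂⟩ := hw₂ B hB hfin
      exact ⟨i₁ + i₂, Submodule.add_mem _ hi₁ hi₂, fun f b hb => by
        simp [LinearMap.add_apply, he₁ f b hb, he₂ f b hb]⟩
  smul_mem' := by
    rintro c d ⟨hd, hw⟩
    refine ⟨fun f g => ?_, fun B hB hfin => ?_⟩
    · simp only [LinearMap.smul_apply, hd f g, dmul_smul_left, dmul_smul_right, smul_add]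
    · obtain ⟨i, hi, he⟩ := hw B hB hfin
      exact ⟨c • i, Submodule.smul_mem _ c hi, fun f b hb => by
        simp [LinearMap.smul_apply, he f b hb]⟩
/-- Multiplication in the null extension `C = A* ⊕ A`. -/
noncomputable def cmul (Δ : A →ₗ[k] A ⊗[k] A) (x y : (A →ₗ[k] k) × A) :
    (A →ₗ[k] k) × A :=
  (dmul Δ x.1 y.1, lact Δ x.1 y.2 + lact Δ y.1 x.2)

theorem lact_add_left (Δ : A →ₗ[k] A ⊗[k] A) (f₁ f₂ : (A →ₗ[k] k)) (a : A) :
    lact Δ (f₁ + f₂) a = lact Δ f₁ a + lact Δ f₂ a := by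
  simp [lact, TensorProduct.map_add_right]

theorem lact_smul_left (Δ : A →ₗ[k] A ⊗[k] A) (c : k) (f : (A →ₗ[k] k)) (a : A) :
    lact Δ (c • f) a = c • lact Δ f a := by
  simp [lact, TensorProduct.map_smul_right]

/-- Right multiplication by an element of the null extension `C = A* ⊕ A`,
as a linear operator on `C`. -/
noncomputable def RopC (Δ : A →ₗ[k] A ⊗[k] A) (x : (A →ₗ[k] k) × A) :
    ((A →ₗ[k] k) × A) →ₗ[k] ((A →ₗ[k] k) × A) where
  toFun y := cmul Δ y x
  map_add' y z := by
    simp only [cmul, Prod.fst_add, Prod.snd_add, Prod.mk_add_mk, dmul_add_left,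
      lact_add_left, map_add]
    rw [Prod.mk.injEq]
    constructor
    · rfl
    · abel
  map_smul' c y := by
    simp only [cmul, Prod.smul_fst, Prod.smul_snd, Prod.smul_mk, dmul_smul_left,
      lact_smul_left, map_smul, RingHom.id_apply, smul_add]

/-- The operator `[x,y] = x'y' - y'x'` on the null extension `C`
(right-operator convention: `z[x,y] = (zx)y - (zy)x`). -/
noncomputable def commC (Δ : A →ₗ[k] A ⊗[k] A) (x y : (A →ₗ[k] k) × A) :
    ((A →ₗ[k] k) × A) →ₗ[k] ((A →ₗ[k] k) × A) :=
  RopC Δ y ∘ₗ RopC Δ x - RopC Δ x ∘ₗ RopC Δ y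

/-- The mixed commutator operator `[f,a]` on `C`, for `f ∈ A*` and `a ∈ A`. -/
noncomputable def commMixed (Δ : A →ₗ[k] A ⊗[k] A) (f : (A →ₗ[k] k)) (a : A) :
    ((A →ₗ[k] k) × A) →ₗ[k] ((A →ₗ[k] k) × A) :=
  commC Δ (f, 0) (0, a)

/-- The space `[A*, A]`, spanned by the mixed commutators, inside `End(C)`. -/
noncomputable def CommAA (Δ : A →ₗ[k] A ⊗[k] A) :
    Submodule k (((A →ₗ[k] k) × A) →ₗ[k] ((A →ₗ[k] k) × A)) :=
  Submodule.span k {u | ∃ (f : (A →ₗ[k] k)) (a : A), u = commMixed Δ f a}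

/-- The Kantor–Koecher–Tits bracket on `L(A*) = A* ⊕ (A*)' ⊕ WIntDer(A*) ⊕ Ā*`
(the third component is taken in `End(A*)`; for elements of `L(A*)` it lies in
`WIntDer(A*)`).  An element `(a, g, d, b)` represents `a + g' + d + b̄`. -/
noncomputable def bracketStar (Δ : A →ₗ[k] A ⊗[k] A)
    (l₁ l₂ : (A →ₗ[k] k) × (A →ₗ[k] k) × ((A →ₗ[k] k) →ₗ[k] (A →ₗ[k] k)) × (A →ₗ[k] k)) :
    (A →ₗ[k] k) × (A →ₗ[k] k) × ((A →ₗ[k] k) →ₗ[k] (A →ₗ[k] k)) × (A →ₗ[k] k) :=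
  (dmul Δ l₁.1 l₂.2.1 + l₂.2.2.1 l₁.1 - dmul Δ l₂.1 l₁.2.1 - l₁.2.2.1 l₂.1,
   dmul Δ l₁.1 l₂.2.2.2 - dmul Δ l₂.1 l₁.2.2.2 + l₂.2.2.1 l₁.2.1 - l₁.2.2.1 l₂.2.1,
   - commD Δ l₁.1 l₂.2.2.2 + commD Δ l₂.1 l₁.2.2.2 + commD Δ l₁.2.1 l₂.2.1
     + (l₂.2.2.1 ∘ₗ l₁.2.2.1 - l₁.2.2.1 ∘ₗ l₂.2.2.1),
   - dmul Δ l₁.2.2.2 l₂.2.1 + l₂.2.2.1 l₁.2.2.2 + dmul Δ l₂.2.2.2 l₁.2.1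
     - l₁.2.2.1 l₂.2.2.2)

/-- The involution `ε(a + c' + d + b̄) = b - c' + d + ā` on `L(A*)`. -/
def epsStar
    (l : (A →ₗ[k] k) × (A →ₗ[k] k) × ((A →ₗ[k] k) →ₗ[k] (A →ₗ[k] k)) × (A →ₗ[k] k)) :
    (A →ₗ[k] k) × (A →ₗ[k] k) × ((A →ₗ[k] k) →ₗ[k] (A →ₗ[k] k)) × (A →ₗ[k] k) :=
  (l.2.2.2, - l.2.1, l.2.2.1, l.1)

/-- The module action `[l, l*]` of `L(A*)` on `L(A) = A ⊕ A' ⊕ [A*,A] ⊕ Ā`.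
`Dex d` is the canonical extension of a weakly inner derivation `d` to `A`
(Proposition 2), passed as a parameter.  An element `(a, b, v, c)` of `L(A)`
represents `a + b' + v + c̄`. -/
noncomputable def actLL (Δ : A →ₗ[k] A ⊗[k] A)
    (Dex : ((A →ₗ[k] k) →ₗ[k] (A →ₗ[k] k)) → (A →ₗ[k] A))
    (l : A × A × (((A →ₗ[k] k) × A) →ₗ[k] ((A →ₗ[k] k) × A)) × A)
    (ls : (A →ₗ[k] k) × (A →ₗ[k] k) × ((A →ₗ[k] k) →ₗ[k] (A →ₗ[k] k)) × (A →ₗ[k] k)) :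
    A × A × (((A →ₗ[k] k) × A) →ₗ[k] ((A →ₗ[k] k) × A)) × A :=
  (lact Δ ls.2.1 l.1 + Dex ls.2.2.1 l.1 - lact Δ ls.1 l.2.1 - (l.2.2.1 (ls.1, 0)).2,
   ract Δ ls.2.2.2 l.1 - lact Δ ls.1 l.2.2.2 + Dex ls.2.2.1 l.2.1,
   commMixed Δ ls.2.2.2 l.1 + commMixed Δ ls.1 l.2.2.2 - commMixed Δ ls.2.1 l.2.1
     + (RopC Δ (ls.2.1, 0) ∘ₗ l.2.2.1 - l.2.2.1 ∘ₗ RopC Δ (ls.2.1, 0))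
     + ((LinearMap.prodMap ls.2.2.1 (Dex ls.2.2.1)) ∘ₗ l.2.2.1
        - l.2.2.1 ∘ₗ (LinearMap.prodMap ls.2.2.1 (Dex ls.2.2.1))),
   - lact Δ ls.2.1 l.2.2.2 + Dex ls.2.2.1 l.2.2.2 + lact Δ ls.2.2.2 l.2.1
     - (l.2.2.1 (ls.2.2.2, 0)).2)

/-- The natural pairing between `L(A*)` and `L(A)`, via the identification
`WIntDer(A*) ≅ ([A*,A])*` given by `φ` (Lemma 2). -/
noncomputable def pairSF (Δ : A →ₗ[k] A ⊗[k] A)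
    (φ : ↥(WIntDer Δ) →ₗ[k] (↥(CommAA Δ) →ₗ[k] k))
    (ls : (A →ₗ[k] k) × (A →ₗ[k] k) × ((A →ₗ[k] k) →ₗ[k] (A →ₗ[k] k)) × (A →ₗ[k] k))
    (l : A × A × (((A →ₗ[k] k) × A) →ₗ[k] ((A →ₗ[k] k) × A)) × A)
    (hd : ls.2.2.1 ∈ WIntDer Δ) (hv : l.2.2.1 ∈ CommAA Δ) : k :=
  ls.1 l.1 + ls.2.1 l.2.1 + φ ⟨ls.2.2.1, hd⟩ ⟨l.2.2.1, hv⟩ + ls.2.2.2 l.2.2.2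


section Aux

variable {k : Type*} [Field k] {A : Type*} [AddCommGroup A] [Module k A]

theorem lact_zero_left (Δ : A →ₗ[k] A ⊗[k] A) : lact Δ (0 : A →ₗ[k] k) = 0 := by
  ext a; simp [lact]

theorem eval_lact (Δ : A →ₗ[k] A ⊗[k] A) (h p : A →ₗ[k] k) (z : A) :
    h (lact Δ p z) = dmul Δ h p z := by
  have : ∀ t : A ⊗[k] A,
      h ((TensorProduct.rid k A) ((TensorProduct.map LinearMap.id p) t)) =
        (TensorProduct.lid k k) ((TensorProduct.map h p) t) := by
    intro t
    induction t using TensorProduct.induction_on with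
    | zero => simp
    | tmul a b => simp [mul_comm]
    | add x y hx hy => simp [map_add, hx, hy]
  simpa [lact, dmul] using this (Δ z)

theorem lact_rep (Δ : A →ₗ[k] A ⊗[k] A) {z : A} {s : Finset (A × A)}
    (hs : Δ z = ∑ p ∈ s, p.1 ⊗ₜ[k] p.2) (h : A →ₗ[k] k) :
    lact Δ h z = ∑ p ∈ s, h p.2 • p.1 := by
  simp [lact, hs, map_sum]

theorem dmul_eval (Δ : A →ₗ[k] A ⊗[k] A) {z : A} {s : Finset (A × A)}
    (hs : Δ z = ∑ p ∈ s, p.1 ⊗ₜ[k] p.2) (f g : A →ₗ[k] k) :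
    dmul Δ f g z = ∑ p ∈ s, f p.1 * g p.2 := by
  simp [dmul, hs, map_sum]

/-- Explicit formula for the mixed commutator. -/
theorem cmFormula (Δ : A →ₗ[k] A ⊗[k] A) (f : A →ₗ[k] k) (a : A)
    (y : (A →ₗ[k] k) × A) :
    commMixed Δ f a y =
      (0, lact Δ (dmul Δ y.1 f) a - lact Δ f (lact Δ y.1 a)) := by
  obtain ⟨g, b⟩ := y
  simp only [commMixed, commC, RopC, LinearMap.sub_apply, LinearMap.coe_comp,
    Function.comp_apply, LinearMap.coe_mk, AddHom.coe_mk]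
  simp [cmul, dmul_zero_left, dmul_zero_right, lact_zero_left, Prod.ext_iff]

theorem commD_apply (Δ : A →ₗ[k] A ⊗[k] A) (p q f : A →ₗ[k] k) :
    commD Δ p q f = dmul Δ (dmul Δ f p) q - dmul Δ (dmul Δ f q) p := rfl


theorem commMixed_add_a (Δ : A →ₗ[k] A ⊗[k] A) (f : A →ₗ[k] k) (a b : A) :
    commMixed Δ f (a + b) = commMixed Δ f a + commMixed Δ f b := by
  refine LinearMap.ext fun y => ?_
  simp [cmFormula, Prod.ext_iff]
  abel

theorem commMixed_smul_a (Δ : A →ₗ[k] A ⊗[k] A) (f : A →ₗ[k] k) (c : k) (a : A) :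
    commMixed Δ f (c • a) = c • commMixed Δ f a := by
  refine LinearMap.ext fun y => ?_
  simp [cmFormula, Prod.ext_iff, smul_sub]

theorem commMixed_zero_a (Δ : A →ₗ[k] A ⊗[k] A) (f : A →ₗ[k] k) :
    commMixed Δ f (0 : A) = 0 := by
  refine LinearMap.ext fun y => ?_
  simp [cmFormula, Prod.ext_iff]

/-- Elements of `CommAA` have zero first component. -/
theorem commAA_fst (Δ : A →ₗ[k] A ⊗[k] A) {u : ((A →ₗ[k] k) × A) →ₗ[k] ((A →ₗ[k] k) × A)}
    (hu : u ∈ CommAA Δ) (y : (A →ₗ[k] k) × A) : (u y).1 = 0 := by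
  induction hu using Submodule.span_induction with
  | mem v hv => obtain ⟨f, a, rfl⟩ := hv; simp [cmFormula]
  | zero => simp
  | add v w _ _ hv hw => simp [hv, hw]
  | smul c v _ hv => simp [hv]

/-- Elements of `CommAA` do not depend on the second component of the argument. -/
theorem commAA_indep (Δ : A →ₗ[k] A ⊗[k] A) {u : ((A →ₗ[k] k) × A) →ₗ[k] ((A →ₗ[k] k) × A)}
    (hu : u ∈ CommAA Δ) (y : (A →ₗ[k] k) × A) : u y = u (y.1, 0) := by
  induction hu using Submodule.span_induction with
  | mem v hv => obtain ⟨f, a, rfl⟩ := hv; simp [cmFormula]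
  | zero => simp
  | add v w _ _ hv hw => simp only [LinearMap.add_apply, hv, hw]
  | smul c v _ hv => simp only [LinearMap.smul_apply, hv]

/-- The elementary operator `y ↦ (0, y.1 w • u)` on `C`. -/
noncomputable def Eop (w u : A) : ((A →ₗ[k] k) × A) →ₗ[k] ((A →ₗ[k] k) × A) where
  toFun y := (0, y.1 w • u)
  map_add' y z := by simp [add_smul, Prod.ext_iff]
  map_smul' c y := by simp [Prod.ext_iff, smul_smul]



theorem dmul_neg_left (Δ : A →ₗ[k] A ⊗[k] A) (f g : A →ₗ[k] k) :
    dmul Δ (-f) g = -(dmul Δ f g) := by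
  have h0 := dmul_add_left Δ f (-f) g
  simp only [add_neg_cancel, dmul_zero_left] at h0
  exact (neg_eq_of_add_eq_zero_right h0.symm).symm

theorem dmul_neg_right (Δ : A →ₗ[k] A ⊗[k] A) (f g : A →ₗ[k] k) :
    dmul Δ f (-g) = -(dmul Δ f g) := by
  have h0 := dmul_add_right Δ f g (-g)
  simp only [add_neg_cancel, dmul_zero_right] at h0
  exact (neg_eq_of_add_eq_zero_right h0.symm).symm

section Jordan

variable (Δ : A →ₗ[k] A ⊗[k] A)

local infixl:70 " ⬝ " => dmul Δ

theorem jordan_R1 (hJ2 : ∀ f g : A →ₗ[k] k, ((f ⬝ f) ⬝ g) ⬝ f = (f ⬝ f) ⬝ (g ⬝ f))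
    (f h g : A →ₗ[k] k) :
    ((f ⬝ h) ⬝ g) ⬝ f + ((h ⬝ f) ⬝ g) ⬝ f + ((h ⬝ h) ⬝ g) ⬝ f
      + ((f ⬝ f) ⬝ g) ⬝ h + ((f ⬝ h) ⬝ g) ⬝ h + ((h ⬝ f) ⬝ g) ⬝ h
    = (f ⬝ h) ⬝ (g ⬝ f) + (h ⬝ f) ⬝ (g ⬝ f) + (h ⬝ h) ⬝ (g ⬝ f)
      + (f ⬝ f) ⬝ (g ⬝ h) + (f ⬝ h) ⬝ (g ⬝ h) + (h ⬝ f) ⬝ (g ⬝ h) := by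
  have e1 : (((f + h) ⬝ (f + h)) ⬝ g) ⬝ (f + h) = ((f + h) ⬝ (f + h)) ⬝ (g ⬝ (f + h)) :=
    hJ2 (f + h) g
  have e2 := hJ2 f g
  have e3 := hJ2 h g
  have expandL : (((f + h) ⬝ (f + h)) ⬝ g) ⬝ (f + h)
      = (((f ⬝ f) ⬝ g) ⬝ f + ((h ⬝ h) ⬝ g) ⬝ h)
        + (((f ⬝ h) ⬝ g) ⬝ f + ((h ⬝ f) ⬝ g) ⬝ f + ((h ⬝ h) ⬝ g) ⬝ f
          + ((f ⬝ f) ⬝ g) ⬝ h + ((f ⬝ h) ⬝ g) ⬝ h + ((h ⬝ f) ⬝ g) ⬝ h) := by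
    simp only [dmul_add_left, dmul_add_right]; abel
  have expandR : ((f + h) ⬝ (f + h)) ⬝ (g ⬝ (f + h))
      = ((f ⬝ f) ⬝ (g ⬝ f) + (h ⬝ h) ⬝ (g ⬝ h))
        + ((f ⬝ h) ⬝ (g ⬝ f) + (h ⬝ f) ⬝ (g ⬝ f) + (h ⬝ h) ⬝ (g ⬝ f)
          + (f ⬝ f) ⬝ (g ⬝ h) + (f ⬝ h) ⬝ (g ⬝ h) + (h ⬝ f) ⬝ (g ⬝ h)) := by
    simp only [dmul_add_left, dmul_add_right]; abel
  rw [expandL, expandR, e2, e3] at e1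
  exact add_left_cancel e1

theorem half_cancel (h2 : (2 : k) ≠ 0) {M : Type*} [AddCommGroup M] [Module k M]
    (P Q : M) (hPQ : P + P = Q + Q) : P = Q := by
  have h : (2 : k) • P = (2 : k) • Q := by rw [two_smul, two_smul]; exact hPQ
  have := congrArg (fun z => (2 : k)⁻¹ • z) h
  simpa [smul_smul, inv_mul_cancel₀ h2] using this

theorem jordan_E (h2 : (2 : k) ≠ 0)
    (hJ2 : ∀ f g : A →ₗ[k] k, ((f ⬝ f) ⬝ g) ⬝ f = (f ⬝ f) ⬝ (g ⬝ f))
    (f h g : A →ₗ[k] k) :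
    ((h ⬝ h) ⬝ g) ⬝ f + ((f ⬝ h) ⬝ g) ⬝ h + ((h ⬝ f) ⬝ g) ⬝ h
    = (h ⬝ h) ⬝ (g ⬝ f) + (f ⬝ h) ⬝ (g ⬝ h) + (h ⬝ f) ⬝ (g ⬝ h) := by
  have r1 := jordan_R1 Δ hJ2 f h g
  have r2 := jordan_R1 Δ hJ2 (-f) h g
  simp only [dmul_neg_left, dmul_neg_right, neg_neg] at r2
  apply half_cancel h2
  calc ((h ⬝ h) ⬝ g) ⬝ f + ((f ⬝ h) ⬝ g) ⬝ h + ((h ⬝ f) ⬝ g) ⬝ h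
        + (((h ⬝ h) ⬝ g) ⬝ f + ((f ⬝ h) ⬝ g) ⬝ h + ((h ⬝ f) ⬝ g) ⬝ h)
      = (((f ⬝ h) ⬝ g) ⬝ f + ((h ⬝ f) ⬝ g) ⬝ f + ((h ⬝ h) ⬝ g) ⬝ f
          + ((f ⬝ f) ⬝ g) ⬝ h + ((f ⬝ h) ⬝ g) ⬝ h + ((h ⬝ f) ⬝ g) ⬝ h)
        - (((f ⬝ h) ⬝ g) ⬝ f + ((h ⬝ f) ⬝ g) ⬝ f + -(((h ⬝ h) ⬝ g) ⬝ f)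
          + ((f ⬝ f) ⬝ g) ⬝ h + -(((f ⬝ h) ⬝ g) ⬝ h) + -(((h ⬝ f) ⬝ g) ⬝ h)) := by abel
    _ = ((f ⬝ h) ⬝ (g ⬝ f) + (h ⬝ f) ⬝ (g ⬝ f) + (h ⬝ h) ⬝ (g ⬝ f)
          + (f ⬝ f) ⬝ (g ⬝ h) + (f ⬝ h) ⬝ (g ⬝ h) + (h ⬝ f) ⬝ (g ⬝ h))
        - ((f ⬝ h) ⬝ (g ⬝ f) + (h ⬝ f) ⬝ (g ⬝ f) + -((h ⬝ h) ⬝ (g ⬝ f))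
          + (f ⬝ f) ⬝ (g ⬝ h) + -((f ⬝ h) ⬝ (g ⬝ h)) + -((h ⬝ f) ⬝ (g ⬝ h))) := by
        rw [r1, r2]
    _ = (h ⬝ h) ⬝ (g ⬝ f) + (f ⬝ h) ⬝ (g ⬝ h) + (h ⬝ f) ⬝ (g ⬝ h)
        + ((h ⬝ h) ⬝ (g ⬝ f) + (f ⬝ h) ⬝ (g ⬝ h) + (h ⬝ f) ⬝ (g ⬝ h)) := by abel

theorem jordan_FL (h2 : (2 : k) ≠ 0)
    (hJ2 : ∀ f g : A →ₗ[k] k, ((f ⬝ f) ⬝ g) ⬝ f = (f ⬝ f) ⬝ (g ⬝ f))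
    (f x y g : A →ₗ[k] k) :
    ((x ⬝ y) ⬝ g) ⬝ f + ((y ⬝ x) ⬝ g) ⬝ f + ((f ⬝ x) ⬝ g) ⬝ y + ((f ⬝ y) ⬝ g) ⬝ x
      + ((x ⬝ f) ⬝ g) ⬝ y + ((y ⬝ f) ⬝ g) ⬝ x
    = (x ⬝ y) ⬝ (g ⬝ f) + (y ⬝ x) ⬝ (g ⬝ f) + (f ⬝ x) ⬝ (g ⬝ y) + (f ⬝ y) ⬝ (g ⬝ x)
      + (x ⬝ f) ⬝ (g ⬝ y) + (y ⬝ f) ⬝ (g ⬝ x) := by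
  have e12 := jordan_E Δ h2 hJ2 f (x + y) g
  have e1 := jordan_E Δ h2 hJ2 f x g
  have e2 := jordan_E Δ h2 hJ2 f y g
  calc ((x ⬝ y) ⬝ g) ⬝ f + ((y ⬝ x) ⬝ g) ⬝ f + ((f ⬝ x) ⬝ g) ⬝ y + ((f ⬝ y) ⬝ g) ⬝ x
      + ((x ⬝ f) ⬝ g) ⬝ y + ((y ⬝ f) ⬝ g) ⬝ x
      = ((((x + y) ⬝ (x + y)) ⬝ g) ⬝ f + ((f ⬝ (x + y)) ⬝ g) ⬝ (x + y)
          + (((x + y) ⬝ f) ⬝ g) ⬝ (x + y))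
        - (((x ⬝ x) ⬝ g) ⬝ f + ((f ⬝ x) ⬝ g) ⬝ x + ((x ⬝ f) ⬝ g) ⬝ x)
        - (((y ⬝ y) ⬝ g) ⬝ f + ((f ⬝ y) ⬝ g) ⬝ y + ((y ⬝ f) ⬝ g) ⬝ y) := by
        simp only [dmul_add_left, dmul_add_right]; abel
    _ = ((x + y) ⬝ (x + y)) ⬝ (g ⬝ f) + (f ⬝ (x + y)) ⬝ (g ⬝ (x + y))
          + ((x + y) ⬝ f) ⬝ (g ⬝ (x + y))
        - ((x ⬝ x) ⬝ (g ⬝ f) + (f ⬝ x) ⬝ (g ⬝ x) + (x ⬝ f) ⬝ (g ⬝ x))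
        - ((y ⬝ y) ⬝ (g ⬝ f) + (f ⬝ y) ⬝ (g ⬝ y) + (y ⬝ f) ⬝ (g ⬝ y)) := by
        rw [e12, e1, e2]
    _ = (x ⬝ y) ⬝ (g ⬝ f) + (y ⬝ x) ⬝ (g ⬝ f) + (f ⬝ x) ⬝ (g ⬝ y) + (f ⬝ y) ⬝ (g ⬝ x)
        + (x ⬝ f) ⬝ (g ⬝ y) + (y ⬝ f) ⬝ (g ⬝ x) := by
        simp only [dmul_add_left, dmul_add_right]; abel

/-- The linearized Jordan identity (identity A). -/
theorem jordan_FA (h2 : (2 : k) ≠ 0) (hc : ∀ f g : A →ₗ[k] k, f ⬝ g = g ⬝ f)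
    (hJ2 : ∀ f g : A →ₗ[k] k, ((f ⬝ f) ⬝ g) ⬝ f = (f ⬝ f) ⬝ (g ⬝ f))
    (x y g w : A →ₗ[k] k) :
    ((x ⬝ y) ⬝ g) ⬝ w + ((x ⬝ w) ⬝ g) ⬝ y + ((y ⬝ w) ⬝ g) ⬝ x
    = (x ⬝ y) ⬝ (g ⬝ w) + (x ⬝ w) ⬝ (g ⬝ y) + (y ⬝ w) ⬝ (g ⬝ x) := by
  have fl := jordan_FL Δ h2 hJ2 w x y g
  rw [hc y x, hc w x, hc w y] at fl
  apply half_cancel h2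
  calc ((x ⬝ y) ⬝ g) ⬝ w + ((x ⬝ w) ⬝ g) ⬝ y + ((y ⬝ w) ⬝ g) ⬝ x
      + (((x ⬝ y) ⬝ g) ⬝ w + ((x ⬝ w) ⬝ g) ⬝ y + ((y ⬝ w) ⬝ g) ⬝ x)
      = ((x ⬝ y) ⬝ g) ⬝ w + ((x ⬝ y) ⬝ g) ⬝ w + ((x ⬝ w) ⬝ g) ⬝ y + ((y ⬝ w) ⬝ g) ⬝ x
        + ((x ⬝ w) ⬝ g) ⬝ y + ((y ⬝ w) ⬝ g) ⬝ x := by abel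
    _ = (x ⬝ y) ⬝ (g ⬝ w) + (x ⬝ y) ⬝ (g ⬝ w) + (x ⬝ w) ⬝ (g ⬝ y) + (y ⬝ w) ⬝ (g ⬝ x)
        + (x ⬝ w) ⬝ (g ⬝ y) + (y ⬝ w) ⬝ (g ⬝ x) := fl
    _ = (x ⬝ y) ⬝ (g ⬝ w) + (x ⬝ w) ⬝ (g ⬝ y) + (y ⬝ w) ⬝ (g ⬝ x)
      + ((x ⬝ y) ⬝ (g ⬝ w) + (x ⬝ w) ⬝ (g ⬝ y) + (y ⬝ w) ⬝ (g ⬝ x)) := by abel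

theorem dmul_sub_left (f₁ f₂ g : A →ₗ[k] k) :
    dmul Δ (f₁ - f₂) g = dmul Δ f₁ g - dmul Δ f₂ g := by
  rw [sub_eq_add_neg, dmul_add_left, dmul_neg_left, sub_eq_add_neg]

theorem dmul_sub_right (f g₁ g₂ : A →ₗ[k] k) :
    dmul Δ f (g₁ - g₂) = dmul Δ f g₁ - dmul Δ f g₂ := by
  rw [sub_eq_add_neg, dmul_add_right, dmul_neg_right, sub_eq_add_neg]

/-- Inner derivations of a Jordan (co)algebra are derivations. -/
theorem commD_isDerivation (h2 : (2 : k) ≠ 0) (hJ : IsJordanCoalgebra Δ)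
    (p q : A →ₗ[k] k) : IsDerivation Δ (commD Δ p q) := by
  obtain ⟨hc, hJ2⟩ := hJ
  intro f g
  simp only [commD_apply, dmul_sub_left, dmul_sub_right]
  rw [hc f ((g ⬝ p) ⬝ q), hc f ((g ⬝ q) ⬝ p)]
  have hI := jordan_FA Δ h2 hc hJ2 f g p q
  have hII := jordan_FA Δ h2 hc hJ2 f g q p
  rw [← sub_eq_zero]
  have key : (((f ⬝ g) ⬝ p) ⬝ q + ((f ⬝ q) ⬝ p) ⬝ g + ((g ⬝ q) ⬝ p) ⬝ f)
      - (((f ⬝ g) ⬝ q) ⬝ p + ((f ⬝ p) ⬝ q) ⬝ g + ((g ⬝ p) ⬝ q) ⬝ f)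
      = ((f ⬝ g) ⬝ (p ⬝ q) + (f ⬝ q) ⬝ (p ⬝ g) + (g ⬝ q) ⬝ (p ⬝ f))
      - ((f ⬝ g) ⬝ (q ⬝ p) + (f ⬝ p) ⬝ (q ⬝ g) + (g ⬝ p) ⬝ (q ⬝ f)) := by
    rw [hI, hII]
  have kill : ((f ⬝ g) ⬝ (p ⬝ q) + (f ⬝ q) ⬝ (p ⬝ g) + (g ⬝ q) ⬝ (p ⬝ f))
      - ((f ⬝ g) ⬝ (q ⬝ p) + (f ⬝ p) ⬝ (q ⬝ g) + (g ⬝ p) ⬝ (q ⬝ f)) = 0 := by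
    rw [show (f ⬝ q) ⬝ (p ⬝ g) = (g ⬝ p) ⬝ (q ⬝ f) from by
        rw [hc g p, hc q f, hc (p ⬝ g) (f ⬝ q)],
      show (g ⬝ q) ⬝ (p ⬝ f) = (f ⬝ p) ⬝ (q ⬝ g) from by
        rw [hc f p, hc q g, hc (p ⬝ f) (g ⬝ q)],
      show (f ⬝ g) ⬝ (p ⬝ q) = (f ⬝ g) ⬝ (q ⬝ p) from by rw [hc p q]]
    abel
  calc ((f ⬝ g) ⬝ p) ⬝ q - ((f ⬝ g) ⬝ q) ⬝ p
        - (((f ⬝ p) ⬝ q) ⬝ g - ((f ⬝ q) ⬝ p) ⬝ g + (((g ⬝ p) ⬝ q) ⬝ f - ((g ⬝ q) ⬝ p) ⬝ f))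
      = (((f ⬝ g) ⬝ p) ⬝ q + ((f ⬝ q) ⬝ p) ⬝ g + ((g ⬝ q) ⬝ p) ⬝ f)
        - (((f ⬝ g) ⬝ q) ⬝ p + ((f ⬝ p) ⬝ q) ⬝ g + ((g ⬝ p) ⬝ q) ⬝ f) := by abel
    _ = 0 := key.trans kill

end Jordan

theorem commD_mem_IntDer (Δ : A →ₗ[k] A ⊗[k] A) (p q : A →ₗ[k] k) :
    commD Δ p q ∈ IntDer Δ :=
  Submodule.subset_span ⟨p, q, rfl⟩

theorem commD_mem_WIntDer (Δ : A →ₗ[k] A ⊗[k] A) (h2 : (2 : k) ≠ 0)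
    (hJ : IsJordanCoalgebra Δ) (p q : A →ₗ[k] k) :
    commD Δ p q ∈ WIntDer Δ := by
  refine ⟨commD_isDerivation Δ h2 hJ p q, fun B hB hfin => ?_⟩
  exact ⟨commD Δ p q, commD_mem_IntDer Δ p q, fun f b hb => rfl⟩

/-- The key nondegeneracy: if a combination of mixed commutators pairs to zero with
all inner derivations, it is the zero operator.  Uses only commutativity. -/
theorem star_nondeg (Δ : A →ₗ[k] A ⊗[k] A)
    (hc : ∀ f g : A →ₗ[k] k, dmul Δ f g = dmul Δ g f)
    {n : ℕ} (c : Fin n → k) (F : Fin n → (A →ₗ[k] k)) (a : Fin n → A)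
    (hz : ∀ p q : A →ₗ[k] k, ∑ i, c i * ((commD Δ p q) (F i)) (a i) = 0) :
    ∑ i, c i • commMixed Δ (F i) (a i) = 0 := by
  refine LinearMap.ext fun y => ?_
  rw [LinearMap.sum_apply, LinearMap.zero_apply]
  have hterm : ∀ i : Fin n, (c i • commMixed Δ (F i) (a i)) y
      = (0, c i • (lact Δ (dmul Δ y.1 (F i)) (a i) - lact Δ (F i) (lact Δ y.1 (a i)))) := by
    intro i
    rw [LinearMap.smul_apply, cmFormula]
    simp [Prod.ext_iff]
  rw [Finset.sum_congr rfl fun i _ => hterm i, Prod.ext_iff]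
  constructor
  · simp [Prod.fst_sum]
  · simp only [Prod.snd_sum, Prod.snd_zero]
    rw [← Module.forall_dual_apply_eq_zero_iff (R := k)]
    intro h
    rw [map_sum]
    refine Eq.trans (Finset.sum_congr rfl fun i _ => ?_) (hz y.1 h)
    rw [map_smul, map_sub, eval_lact, eval_lact, eval_lact]
    rw [commD_apply, LinearMap.sub_apply]
    rw [hc h (dmul Δ y.1 (F i)), hc y.1 (F i), hc h (F i)]
    simp [smul_eq_mul]

/-- Evaluation of `φ e` on an explicit combination of mixed commutators. -/
theorem phi_eval_sum (Δ : A →ₗ[k] A ⊗[k] A)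
    (φ : ↥(WIntDer Δ) →ₗ[k] (↥(CommAA Δ) →ₗ[k] k))
    (hφ : ∀ (e : ↥(WIntDer Δ)) (f : A →ₗ[k] k) (a : A) (h : commMixed Δ f a ∈ CommAA Δ),
      φ e ⟨commMixed Δ f a, h⟩ = (e : ((A →ₗ[k] k) →ₗ[k] (A →ₗ[k] k))) f a)
    (e : ↥(WIntDer Δ)) {n : ℕ} (c : Fin n → k) (F : Fin n → (A →ₗ[k] k)) (a : Fin n → A)
    (hmem : (∑ i, c i • commMixed Δ (F i) (a i)) ∈ CommAA Δ) :
    φ e ⟨∑ i, c i • commMixed Δ (F i) (a i), hmem⟩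
      = ∑ i, c i * ((e : ((A →ₗ[k] k) →ₗ[k] (A →ₗ[k] k))) (F i)) (a i) := by
  have hsub : (⟨∑ i, c i • commMixed Δ (F i) (a i), hmem⟩ : ↥(CommAA Δ))
      = ∑ i, c i • (⟨commMixed Δ (F i) (a i),
          Submodule.subset_span ⟨F i, a i, rfl⟩⟩ : ↥(CommAA Δ)) := by
    apply Subtype.ext
    push_cast
    rfl
  rw [hsub, map_sum]
  refine Finset.sum_congr rfl fun i _ => ?_
  rw [map_smul]
  exact (congrArg (c i • ·) (hφ e (F i) (a i) _)).trans (smul_eq_mul _ _)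

/-- Representation of a mixed commutator as a finite combination of elementary
operators, with coefficients linear in `f`. -/
theorem commMixed_rep (Δ : A →ₗ[k] A ⊗[k] A)
    (S : A → Finset (A × A)) (hS : ∀ w, Δ w = ∑ p ∈ S w, p.1 ⊗ₜ[k] p.2)
    (f : A →ₗ[k] k) (z : A) :
    commMixed Δ f z = (∑ p ∈ S z, ∑ r ∈ S p.2, f r.2 • Eop r.1 p.1)
      - ∑ p ∈ S z, ∑ r ∈ S p.1, f r.2 • Eop p.2 r.1 := by
  refine LinearMap.ext fun y => ?_
  rw [cmFormula, LinearMap.sub_apply, LinearMap.sum_apply, LinearMap.sum_apply]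
  have h1 : ∀ p : A × A, (∑ r ∈ S p.2, f r.2 • Eop r.1 p.1) y
      = (0, ∑ r ∈ S p.2, (y.1 r.1 * f r.2) • p.1) := by
    intro p
    rw [LinearMap.sum_apply, Prod.ext_iff]
    constructor
    · simp [Eop, Prod.fst_sum]
    · rw [Prod.snd_sum]
      refine Finset.sum_congr rfl fun r _ => ?_
      simp [Eop, smul_smul, mul_comm]
  have h2 : ∀ p : A × A, (∑ r ∈ S p.1, f r.2 • Eop p.2 r.1) y
      = (0, ∑ r ∈ S p.1, y.1 p.2 • f r.2 • r.1) := by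
    intro p
    rw [LinearMap.sum_apply, Prod.ext_iff]
    constructor
    · simp [Eop, Prod.fst_sum]
    · rw [Prod.snd_sum]
      refine Finset.sum_congr rfl fun r _ => ?_
      simp [Eop, smul_smul, mul_comm]
  rw [Finset.sum_congr rfl fun p _ => h1 p, Finset.sum_congr rfl fun p _ => h2 p]
  rw [Prod.ext_iff]
  constructor
  · simp [Prod.fst_sum]
  · simp only [Prod.snd_sum, Prod.snd_sub]
    rw [lact_rep Δ (hS z) (dmul Δ y.1 f), lact_rep Δ (hS z) y.1]
    rw [Finset.sum_congr rfl fun (p : A × A) _ =>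
      congrArg (· • p.1) (dmul_eval Δ (hS p.2) y.1 f)]
    rw [map_sum]
    simp only [map_smul]
    rw [Finset.sum_congr rfl fun (p : A × A) _ =>
      congrArg (fun w => y.1 p.2 • w) (congrArg (lact Δ f) rfl)]
    have h3 : ∀ p : A × A, lact Δ f p.1 = ∑ r ∈ S p.1, f r.2 • r.1 := fun p =>
      lact_rep Δ (hS p.1) f
    rw [Finset.sum_congr rfl fun (p : A × A) _ =>
      congrArg (fun w => y.1 p.2 • w) (h3 p)]
    simp only [Finset.sum_smul, Finset.smul_sum]


noncomputable instance opSubmoduleACG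
    (N : Submodule k (((A →ₗ[k] k) × A) →ₗ[k] ((A →ₗ[k] k) × A))) : AddCommGroup ↥N :=
  @Submodule.addCommGroup k _ _ LinearMap.addCommGroup LinearMap.module N

end Aux

set_option maxHeartbeats 2000000 in
set_option synthInstance.maxHeartbeats 400000 in
/-- **Lemma 4.** For every `l* ∈ L(A*)` and `l ∈ L(A)` there is an element `i` of the ideal
`I(A*) = A* ⊕ (A*)' ⊕ IntDer(A*) ⊕ Ā*` with `[l, l*] = [l, i]` and `⟨l*, l⟩ = ⟨i, l⟩`. -/
theorem lemma4_inner_approx {k : Type*} [Field k] {A : Type*} [AddCommGroup A] [Module k A]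
    (h2 : (2 : k) ≠ 0) (Δ : A →ₗ[k] A ⊗[k] A) (hJ : IsJordanCoalgebra Δ)
    (one : A →ₗ[k] k) (hone : ∀ f, dmul Δ one f = f ∧ dmul Δ f one = f)
    (φ : ↥(WIntDer Δ) →ₗ[k] (↥(CommAA Δ) →ₗ[k] k))
    (hφ : ∀ (e : ↥(WIntDer Δ)) (f : A →ₗ[k] k) (a : A) (h : commMixed Δ f a ∈ CommAA Δ),
      φ e ⟨commMixed Δ f a, h⟩ = (e : ((A →ₗ[k] k) →ₗ[k] (A →ₗ[k] k))) f a)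
    (hφbij : Function.Bijective φ)
    (Dex : ((A →ₗ[k] k) →ₗ[k] (A →ₗ[k] k)) → (A →ₗ[k] A))
    (hDex : ∀ d, d ∈ WIntDer Δ → ∀ (f : A →ₗ[k] k) (a : A), f (Dex d a) = - d f a)
    (ls : (A →ₗ[k] k) × (A →ₗ[k] k) × ((A →ₗ[k] k) →ₗ[k] (A →ₗ[k] k)) × (A →ₗ[k] k))
    (l : A × A × (((A →ₗ[k] k) × A) →ₗ[k] ((A →ₗ[k] k) × A)) × A)
    (hd : ls.2.2.1 ∈ WIntDer Δ) (hl : l.2.2.1 ∈ CommAA Δ) :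
    ∃ (i : (A →ₗ[k] k) × (A →ₗ[k] k) × ((A →ₗ[k] k) →ₗ[k] (A →ₗ[k] k)) × (A →ₗ[k] k)),
      i.2.2.1 ∈ IntDer Δ ∧
      ∃ hiw : i.2.2.1 ∈ WIntDer Δ,
        actLL Δ Dex l ls = actLL Δ Dex l i ∧
        pairSF Δ φ ls l hd hl = pairSF Δ φ i l hiw hl := by
  classical
  obtain ⟨hcomm, hJ2⟩ := hJ
  -- tensor representations of Δ, chosen once and for all
  choose S hS using fun z : A => TensorProduct.exists_finset (Δ z)
  -- representation of the [A*,A]-component of l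
  obtain ⟨n, c, G0, hrep⟩ := Submodule.mem_span_set'.mp hl
  choose F a hFa using fun i => (G0 i).2
  have hv : l.2.2.1 = ∑ i, c i • commMixed Δ (F i) (a i) := by
    rw [← hrep]
    exact Finset.sum_congr rfl fun i _ => by rw [hFa i]
  -- the relevant finite set of points of A
  set P : Finset A := ({l.1, l.2.1, l.2.2.2} : Finset A) ∪
      Finset.univ.biUnion (fun i : Fin n =>
        ({a i} : Finset A) ∪ (S (a i)).biUnion (fun p =>
          ({p.1, p.2, lact Δ (F i) p.1} : Finset A) ∪ (S p.2).image Prod.fst)) with hPdef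
  have hPl1 : l.1 ∈ P := by
    refine Finset.mem_union_left _ ?_; simp
  have hPl21 : l.2.1 ∈ P := by
    refine Finset.mem_union_left _ ?_; simp
  have hPl222 : l.2.2.2 ∈ P := by
    refine Finset.mem_union_left _ ?_; simp
  have hPa : ∀ i : Fin n, a i ∈ P := fun i =>
    Finset.mem_union_right _ (Finset.mem_biUnion.mpr ⟨i, Finset.mem_univ i,
      Finset.mem_union_left _ (by simp)⟩)
  have hPp1 : ∀ (i : Fin n), ∀ p ∈ S (a i), p.1 ∈ P := fun i p hp =>
    Finset.mem_union_right _ (Finset.mem_biUnion.mpr ⟨i, Finset.mem_univ i,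
      Finset.mem_union_right _ (Finset.mem_biUnion.mpr ⟨p, hp,
        Finset.mem_union_left _ (by simp)⟩)⟩)
  have hPp2 : ∀ (i : Fin n), ∀ p ∈ S (a i), p.2 ∈ P := fun i p hp =>
    Finset.mem_union_right _ (Finset.mem_biUnion.mpr ⟨i, Finset.mem_univ i,
      Finset.mem_union_right _ (Finset.mem_biUnion.mpr ⟨p, hp,
        Finset.mem_union_left _ (by simp)⟩)⟩)
  have hPlact : ∀ (i : Fin n), ∀ p ∈ S (a i), lact Δ (F i) p.1 ∈ P := fun i p hp =>
    Finset.mem_union_right _ (Finset.mem_biUnion.mpr ⟨i, Finset.mem_univ i,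
      Finset.mem_union_right _ (Finset.mem_biUnion.mpr ⟨p, hp,
        Finset.mem_union_left _ (by simp)⟩)⟩)
  have hPr1 : ∀ (i : Fin n), ∀ p ∈ S (a i), ∀ r ∈ S p.2, r.1 ∈ P := fun i p hp r hr =>
    Finset.mem_union_right _ (Finset.mem_biUnion.mpr ⟨i, Finset.mem_univ i,
      Finset.mem_union_right _ (Finset.mem_biUnion.mpr ⟨p, hp,
        Finset.mem_union_right _ (Finset.mem_image.mpr ⟨r, hr, rfl⟩)⟩)⟩)
  -- the finite-dimensional subspace N of CommAA
  set Gset : Finset (((A →ₗ[k] k) × A) →ₗ[k] ((A →ₗ[k] k) × A)) :=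
    P.biUnion (fun z => (S z).biUnion fun p =>
      ((S p.2).image fun r => Eop r.1 p.1) ∪ ((S p.1).image fun r => Eop p.2 r.1))
      with hGdef
  set N : Submodule k (((A →ₗ[k] k) × A) →ₗ[k] ((A →ₗ[k] k) × A)) :=
    Submodule.span k (Gset : Set _) ⊓ CommAA Δ with hNdef
  have hNle : N ≤ CommAA Δ := inf_le_right
  have hNfd : FiniteDimensional k ↥N := by
    have h1 : FiniteDimensional k ↥(Submodule.span k
        (Gset : Set (((A →ₗ[k] k) × A) →ₗ[k] ((A →ₗ[k] k) × A)))) :=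
      Module.Finite.span_of_finite k Gset.finite_toSet
    exact Module.Finite.of_injective (Submodule.inclusion
      (inf_le_left : Submodule.span k (Gset : Set _) ⊓ CommAA Δ ≤ _))
      (Submodule.inclusion_injective _)
  have hmemN : ∀ z ∈ P, ∀ f : A →ₗ[k] k, commMixed Δ f z ∈ N := by
    intro z hz f
    refine Submodule.mem_inf.mpr ⟨?_, Submodule.subset_span ⟨f, z, rfl⟩⟩
    rw [commMixed_rep Δ S hS f z]
    refine @Submodule.sub_mem k (((A →ₗ[k] k) × A) →ₗ[k] ((A →ₗ[k] k) × A)) _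
      LinearMap.addCommGroup LinearMap.module (Submodule.span k (Gset : Set _)) _ _
      (Submodule.sum_mem _ fun p hp => Submodule.sum_mem _ fun r hr =>
        Submodule.smul_mem _ _ (Submodule.subset_span ?_))
      (Submodule.sum_mem _ fun p hp => Submodule.sum_mem _ fun r hr =>
        Submodule.smul_mem _ _ (Submodule.subset_span ?_))
    · exact Finset.mem_coe.mpr (Finset.mem_biUnion.mpr ⟨z, hz,
        Finset.mem_biUnion.mpr ⟨p, hp,
          Finset.mem_union_left _ (Finset.mem_image.mpr ⟨r, hr, rfl⟩)⟩⟩)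
    · exact Finset.mem_coe.mpr (Finset.mem_biUnion.mpr ⟨z, hz,
        Finset.mem_biUnion.mpr ⟨p, hp,
          Finset.mem_union_right _ (Finset.mem_image.mpr ⟨r, hr, rfl⟩)⟩⟩)
  have hmemNspan : ∀ z ∈ Submodule.span k (P : Set A), ∀ f : A →ₗ[k] k,
      commMixed Δ f z ∈ N := by
    intro z hz
    induction hz using Submodule.span_induction with
    | mem w hw => exact fun f => hmemN w (Finset.mem_coe.mp hw) f
    | zero => intro f; rw [commMixed_zero_a]; exact zero_mem N
    | add u w _ _ hu hw => intro f; rw [commMixed_add_a]; exact add_mem (hu f) (hw f)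
    | smul t u _ hu => intro f; rw [commMixed_smul_a]; exact Submodule.smul_mem _ _ (hu f)
  -- the duality argument producing the inner approximant
  set W' : Submodule k ↥(WIntDer Δ) := (IntDer Δ).comap (WIntDer Δ).subtype with hW'def
  set R : ↥(WIntDer Δ) →ₗ[k] (↥N →ₗ[k] k) :=
    (LinearMap.lcomp k k (Submodule.inclusion hNle)).comp φ with hRdef
  have hRapp : ∀ (e : ↥(WIntDer Δ)) (μ : ↥N), R e μ = φ e ⟨(μ : _), hNle μ.2⟩ := by
    intro e μ; rfl
  set U : Submodule k (↥N →ₗ[k] k) := Submodule.map R W' with hUdef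
  have hU : U = ⊤ := by
    have hbot : U.dualCoannihilator = ⊥ := by
      rw [Submodule.eq_bot_iff]
      intro μ hμ
      rw [Submodule.mem_dualCoannihilator] at hμ
      obtain ⟨m, cm, Gm, hm⟩ := Submodule.mem_span_set'.mp (hNle μ.2)
      choose Fm am hFam using fun j => (Gm j).2
      have hμrep : (μ : ((A →ₗ[k] k) × A) →ₗ[k] ((A →ₗ[k] k) × A))
          = ∑ j, cm j • commMixed Δ (Fm j) (am j) := by
        rw [← hm]
        exact Finset.sum_congr rfl fun j _ => by rw [hFam j]
      have hmm : (∑ j, cm j • commMixed Δ (Fm j) (am j)) ∈ CommAA Δ := by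
        rw [← hμrep]; exact hNle μ.2
      have hz : ∀ p q : A →ₗ[k] k,
          ∑ j, cm j * ((commD Δ p q) (Fm j)) (am j) = 0 := by
        intro p q
        have hpq : (⟨commD Δ p q, commD_mem_WIntDer Δ h2 ⟨hcomm, hJ2⟩ p q⟩ :
            ↥(WIntDer Δ)) ∈ W' := by
          rw [hW'def]; exact Submodule.mem_comap.mpr (commD_mem_IntDer Δ p q)
        have h0 := hμ _ (Submodule.mem_map_of_mem hpq)
        rw [hRapp] at h0
        rw [show (⟨(μ : _), hNle μ.2⟩ : ↥(CommAA Δ))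
            = ⟨∑ j, cm j • commMixed Δ (Fm j) (am j), hmm⟩ from Subtype.ext hμrep] at h0
        rw [phi_eval_sum Δ φ hφ _ cm Fm am hmm] at h0
        exact h0
      have h0 : (μ : ((A →ₗ[k] k) × A) →ₗ[k] ((A →ₗ[k] k) × A)) = 0 := by
        rw [hμrep]; exact star_nondeg Δ hcomm cm Fm am hz
      exact Subtype.ext h0
    have h1 := Subspace.finrank_add_finrank_dualCoannihilator_eq (K := k) (V := ↥N) U
    rw [hbot, finrank_bot k ↥N, add_zero] at h1
    haveI : FiniteDimensional k (Module.Dual k ↥N) :=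
      Subspace.instModuleDualFiniteDimensional (K := k) (V := ↥N)
    haveI : FiniteDimensional k (↥N →ₗ[k] k) :=
      inferInstanceAs (FiniteDimensional k (Module.Dual k ↥N))
    exact Submodule.eq_top_of_finrank_eq
      (h1.trans (Subspace.dual_finrank_eq (K := k) (V := ↥N)).symm)
  have hdmem : R ⟨ls.2.2.1, hd⟩ ∈ U := by rw [hU]; exact Submodule.mem_top
  obtain ⟨w', hw'1, hw'2⟩ := Submodule.mem_map.mp hdmem
  have hwInt : (w' : (A →ₗ[k] k) →ₗ[k] (A →ₗ[k] k)) ∈ IntDer Δ :=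
    Submodule.mem_comap.mp hw'1
  have hwW : (w' : (A →ₗ[k] k) →ₗ[k] (A →ₗ[k] k)) ∈ WIntDer Δ := w'.2
  -- agreement of φ-values on N
  have hAg : ∀ (m : ((A →ₗ[k] k) × A) →ₗ[k] ((A →ₗ[k] k) × A)) (hm : m ∈ N),
      φ w' ⟨m, hNle hm⟩ = φ ⟨ls.2.2.1, hd⟩ ⟨m, hNle hm⟩ := by
    intro m hm
    have h0 := LinearMap.congr_fun hw'2 ⟨m, hm⟩
    rw [hRapp, hRapp] at h0
    exact h0
  -- pointwise agreement of w' and d on the span of P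
  have pointAgree : ∀ z ∈ Submodule.span k (P : Set A), ∀ f : A →ₗ[k] k,
      ((w' : (A →ₗ[k] k) →ₗ[k] (A →ₗ[k] k)) f) z = (ls.2.2.1 f) z := by
    intro z hz f
    have h1 := hφ w' f z (hNle (hmemNspan z hz f))
    have h2' := hφ ⟨ls.2.2.1, hd⟩ f z (hNle (hmemNspan z hz f))
    have h3 := hAg (commMixed Δ f z) (hmemNspan z hz f)
    exact (h1.symm.trans h3).trans h2'
  have hDexEq : ∀ z ∈ Submodule.span k (P : Set A),
      Dex ls.2.2.1 z = Dex (w' : (A →ₗ[k] k) →ₗ[k] (A →ₗ[k] k)) z := by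
    intro z hz
    rw [← sub_eq_zero]
    apply (Module.forall_dual_apply_eq_zero_iff k _).mp
    intro f
    rw [map_sub, hDex _ hd f z, hDex _ hwW f z, pointAgree z hz f, sub_self]
  have hspanP : ∀ z ∈ P, z ∈ Submodule.span k (P : Set A) := fun z hz =>
    Submodule.subset_span (Finset.mem_coe.mpr hz)
  -- membership of the second component of values of v in span P
  have hTspan : ∀ (g : A →ₗ[k] k) (b : A),
      ((l.2.2.1 (g, b)).2 : A) ∈ Submodule.span k (P : Set A) := by
    intro g b
    have happ : l.2.2.1 (g, b) = ∑ i, c i • commMixed Δ (F i) (a i) (g, b) := by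
      rw [hv]; simp [LinearMap.sum_apply]
    rw [happ, Prod.snd_sum]
    refine Submodule.sum_mem _ fun i _ => ?_
    have : (c i • commMixed Δ (F i) (a i) (g, b)).2
        = c i • (lact Δ (dmul Δ g (F i)) (a i) - lact Δ (F i) (lact Δ g (a i))) := by
      rw [cmFormula]; rfl
    rw [this]
    refine Submodule.smul_mem _ _ (sub_mem ?_ ?_)
    · rw [lact_rep Δ (hS (a i))]
      exact Submodule.sum_mem _ fun p hp =>
        Submodule.smul_mem _ _ (hspanP p.1 (hPp1 i p hp))
    · rw [lact_rep Δ (hS (a i)) g, map_sum]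
      refine Submodule.sum_mem _ fun p hp => ?_
      rw [map_smul]
      exact Submodule.smul_mem _ _ (hspanP _ (hPlact i p hp))
  -- v-values at (g,0) agree when g's agree on P
  have hVagree : ∀ g₁ g₂ : A →ₗ[k] k, (∀ z ∈ P, g₁ z = g₂ z) →
      (l.2.2.1 (g₁, (0 : A))).2 = (l.2.2.1 (g₂, (0 : A))).2 := by
    intro g₁ g₂ hg
    have happ : ∀ g : A →ₗ[k] k, (l.2.2.1 (g, (0 : A))).2
        = ∑ i, c i • (lact Δ (dmul Δ g (F i)) (a i) - lact Δ (F i) (lact Δ g (a i))) := by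
      intro g
      rw [hv]
      rw [LinearMap.sum_apply, Prod.snd_sum]
      refine Finset.sum_congr rfl fun i _ => ?_
      rw [LinearMap.smul_apply, cmFormula]; rfl
    rw [happ g₁, happ g₂]
    refine Finset.sum_congr rfl fun i _ => ?_
    congr 1
    have e1 : lact Δ g₁ (a i) = lact Δ g₂ (a i) := by
      rw [lact_rep Δ (hS (a i)) g₁, lact_rep Δ (hS (a i)) g₂]
      exact Finset.sum_congr rfl fun p hp => by rw [hg p.2 (hPp2 i p hp)]
    have e2 : lact Δ (dmul Δ g₁ (F i)) (a i) = lact Δ (dmul Δ g₂ (F i)) (a i) := by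
      rw [lact_rep Δ (hS (a i)), lact_rep Δ (hS (a i))]
      refine Finset.sum_congr rfl fun p hp => ?_
      rw [dmul_eval Δ (hS p.2) g₁ (F i), dmul_eval Δ (hS p.2) g₂ (F i)]
      rw [Finset.sum_congr rfl fun r hr => by rw [hg r.1 (hPr1 i p hp r hr)]]
    rw [e1, e2]
  -- the element i of the ideal
  refine ⟨(ls.1, ls.2.1, (w' : (A →ₗ[k] k) →ₗ[k] (A →ₗ[k] k)), ls.2.2.2), hwInt, hwW,
    ?_, ?_⟩
  · -- equality of actions
    have e1 : Dex ls.2.2.1 l.1 = Dex ((w' : ↥(WIntDer Δ)) : (A →ₗ[k] k) →ₗ[k] (A →ₗ[k] k)) l.1 := hDexEq l.1 (hspanP l.1 hPl1)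
    have e2 : Dex ls.2.2.1 l.2.1 = Dex ((w' : ↥(WIntDer Δ)) : (A →ₗ[k] k) →ₗ[k] (A →ₗ[k] k)) l.2.1 := hDexEq l.2.1 (hspanP l.2.1 hPl21)
    have e4 : Dex ls.2.2.1 l.2.2.2 = Dex ((w' : ↥(WIntDer Δ)) : (A →ₗ[k] k) →ₗ[k] (A →ₗ[k] k)) l.2.2.2 :=
      hDexEq l.2.2.2 (hspanP l.2.2.2 hPl222)
    have e3 : (LinearMap.prodMap ls.2.2.1 (Dex ls.2.2.1)) ∘ₗ l.2.2.1
          - l.2.2.1 ∘ₗ (LinearMap.prodMap ls.2.2.1 (Dex ls.2.2.1))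
        = (LinearMap.prodMap (w' : (A →ₗ[k] k) →ₗ[k] (A →ₗ[k] k))
            (Dex (w' : (A →ₗ[k] k) →ₗ[k] (A →ₗ[k] k)))) ∘ₗ l.2.2.1
          - l.2.2.1 ∘ₗ (LinearMap.prodMap (w' : (A →ₗ[k] k) →ₗ[k] (A →ₗ[k] k))
            (Dex (w' : (A →ₗ[k] k) →ₗ[k] (A →ₗ[k] k)))) := by
      refine LinearMap.ext fun y => ?_
      simp only [LinearMap.sub_apply, LinearMap.coe_comp, Function.comp_apply,
        LinearMap.prodMap_apply]
      rw [Prod.ext_iff]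
      constructor
      · simp [commAA_fst Δ hl]
      · simp only [Prod.snd_sub]
        have hT : Dex ls.2.2.1 (l.2.2.1 y).2 = Dex ((w' : ↥(WIntDer Δ)) : (A →ₗ[k] k) →ₗ[k] (A →ₗ[k] k)) (l.2.2.1 y).2 := by
          have := hTspan y.1 y.2
          exact hDexEq _ (by simpa using this)
        have hindep : ∀ g : A →ₗ[k] k, ∀ b : A,
            (l.2.2.1 (g, b)).2 = (l.2.2.1 (g, (0 : A))).2 := by
          intro g b
          have := commAA_indep Δ hl (g, b)
          rw [this]
        have hval : (l.2.2.1 (ls.2.2.1 y.1, Dex ls.2.2.1 y.2)).2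
            = (l.2.2.1 (((w' : ↥(WIntDer Δ)) : (A →ₗ[k] k) →ₗ[k] (A →ₗ[k] k)) y.1, Dex ((w' : ↥(WIntDer Δ)) : (A →ₗ[k] k) →ₗ[k] (A →ₗ[k] k)) y.2)).2 := by
          rw [hindep (ls.2.2.1 y.1) _, hindep (((w' : ↥(WIntDer Δ)) : (A →ₗ[k] k) →ₗ[k] (A →ₗ[k] k)) y.1) _]
          exact hVagree _ _ fun z hz => (pointAgree z (hspanP z hz) y.1).symm
        rw [hT, hval]
    show actLL Δ Dex l ls = actLL Δ Dex l (ls.1, ls.2.1, ((w' : ↥(WIntDer Δ)) : (A →ₗ[k] k) →ₗ[k] (A →ₗ[k] k)), ls.2.2.2)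
    simp only [actLL]
    rw [e1, e2, e4, e3]
  · -- equality of pairings
    have hvN : l.2.2.1 ∈ N := by
      rw [hv]
      exact Submodule.sum_mem _ fun i _ =>
        Submodule.smul_mem _ _ (hmemN (a i) (hPa i) (F i))
    have hpair : φ ⟨ls.2.2.1, hd⟩ ⟨l.2.2.1, hl⟩ = φ w' ⟨l.2.2.1, hl⟩ :=
      (hAg l.2.2.1 hvN).symm
    exact congrArg (fun t => ls.1 l.1 + ls.2.1 l.2.1 + t + ls.2.2.2 l.2.2.2) hpair
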